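/- arXiv:2503.20473 — 2 statements merged into one kernel-verified Lean document; each statement's English description precedes it below -/
import Mathlib

section
/- Let P = (x₁,...,xₙ) with Σxᵢ = 0 and Σ|xᵢ| = 2α for some α > 0, let k ∈ [n-1], and let X_P be the sum of a uniformly random k-subset of P. Then for every t ∈ (0, α): P(X_P ≥ t) ≤ 1 - min{1, t/(α-t)}·(1 - 2k(n-k)/(n(n-1))). -/
open Finset

theorem count_mem {n k : ℕ} (hk1 : 1 ≤ k) (i : Fin n) :
    (((univ : Finset (Fin n)).powersetCard k).filter (fun F => i ∈ F)).card
      = (((univ : Finset (Fin n)).erase i).powersetCard (k-1)).card := by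
  apply Finset.card_bij' (fun F _ => F.erase i) (fun G _ => insert i G)
  · intro F hF
    simp only [mem_filter] at hF
    exact insert_erase hF.2
  · intro G hG
    simp only [mem_powersetCard] at hG
    have hiG : i ∉ G := fun h => (mem_erase.1 (hG.1 h)).1 rfl
    exact erase_insert hiG
  · intro F hF
    simp only [mem_filter, mem_powersetCard] at hF
    simp only [mem_powersetCard]
    exact ⟨erase_subset_erase _ hF.1.1, by rw [card_erase_of_mem hF.2, hF.1.2]⟩
  · intro G hG
    simp only [mem_powersetCard] at hG
    have hiG : i ∉ G := fun h => (mem_erase.1 (hG.1 h)).1 rfl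
    simp only [mem_filter, mem_powersetCard]
    refine ⟨⟨?_, ?_⟩, mem_insert_self _ _⟩
    · exact insert_subset (mem_univ i) (hG.1.trans (erase_subset _ _))
    · rw [card_insert_of_notMem hiG, hG.2]; omega

theorem count_pair {n k : ℕ} {i j : Fin n} :
    ((((univ : Finset (Fin n)).powersetCard k).filter (fun F => i ∈ F ∧ j ∉ F)).card
      ≤ (((univ.erase j).erase i).powersetCard (k-1)).card) := by
  apply Finset.card_le_card_of_injOn (fun F => F.erase i)
  · intro F hF
    simp only [mem_coe, mem_filter, mem_powersetCard] at hF
    simp only [mem_coe, mem_powersetCard]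
    refine ⟨?_, by rw [card_erase_of_mem hF.2.1, hF.1.2]⟩
    intro a ha
    rcases mem_erase.1 ha with ⟨hai, haF⟩
    exact mem_erase.2 ⟨hai, mem_erase.2 ⟨fun h => hF.2.2 (h ▸ haF), mem_univ a⟩⟩
  · intro F hF G hG h
    simp only [mem_coe, mem_filter] at hF hG
    simp only [] at h
    rw [← insert_erase hF.2.1, ← insert_erase hG.2.1]
    exact congrArg (insert i) h

theorem sum_subsets_sum {n : ℕ} (S : Finset (Finset (Fin n))) (f : Fin n → ℝ) :
    ∑ F ∈ S, ∑ i ∈ F, f i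
      = ∑ i, ((S.filter (fun F => i ∈ F)).card : ℝ) * f i := by
  have h1 : ∀ F ∈ S, ∑ i ∈ F, f i = ∑ i : Fin n, if i ∈ F then f i else 0 := by
    intro F _
    rw [Finset.sum_ite_mem, univ_inter]
  rw [Finset.sum_congr rfl h1, Finset.sum_comm]
  refine Finset.sum_congr rfl fun i _ => ?_
  rw [← Finset.sum_filter, Finset.sum_const, nsmul_eq_mul]

theorem sum_prod_split {n : ℕ} (S : Finset (Finset (Fin n))) (p m : Fin n → ℝ) :
    ∑ F ∈ S, (∑ i ∈ F, p i) * (∑ j ∈ univ \ F, m j)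
      = ∑ i, ∑ j, ((S.filter (fun F => i ∈ F ∧ j ∉ F)).card : ℝ) * (p i * m j) := by
  have h1 : ∀ F ∈ S, (∑ i ∈ F, p i) * (∑ j ∈ univ \ F, m j)
      = ∑ i : Fin n, ∑ j : Fin n, if i ∈ F ∧ j ∉ F then p i * m j else 0 := by
    intro F _
    rw [Finset.sum_mul_sum]
    rw [show ∑ i ∈ F, ∑ j ∈ univ \ F, p i * m j
        = ∑ i : Fin n, if i ∈ F then (∑ j ∈ univ \ F, p i * m j) else 0 by
      rw [Finset.sum_ite_mem, univ_inter]]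
    refine Finset.sum_congr rfl fun i _ => ?_
    split_ifs with hi
    · rw [show univ \ F = univ.filter (fun j => j ∉ F) by
        rw [Finset.sdiff_eq_filter], Finset.sum_filter]
      refine Finset.sum_congr rfl fun j _ => ?_
      simp [hi]
    · rw [Finset.sum_eq_zero]
      intro j _
      simp [hi]
  rw [Finset.sum_congr rfl h1, Finset.sum_comm]
  refine Finset.sum_congr rfl fun i _ => ?_
  rw [Finset.sum_comm]
  refine Finset.sum_congr rfl fun j _ => ?_
  rw [← Finset.sum_filter, Finset.sum_const, nsmul_eq_mul]

theorem choose_identity {n k : ℕ} (hn : 2 ≤ n) (hk1 : 1 ≤ k) (hkn : k ≤ n - 1) :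
    (n-2).choose (k-1) * (n * (n-1)) = n.choose k * (k * (n - k)) := by
  obtain ⟨a, rfl⟩ : ∃ a, n = a + 2 := ⟨n - 2, by omega⟩
  obtain ⟨b, rfl⟩ : ∃ b, k = b + 1 := ⟨k - 1, by omega⟩
  have hba : b ≤ a := by omega
  simp only [show a + 2 - 2 = a by omega, show b + 1 - 1 = b by omega,
    show a + 2 - 1 = a + 1 by omega, show a + 2 - (b + 1) = a + 1 - b by omega]
  have h1 := Nat.add_one_mul_choose_eq (a+1) b
  have h2 : (a+1) * Nat.choose a b = Nat.choose (a+1) b * (a+1-b) := by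
    have hs1 : Nat.choose (a+1) (a+1-b) = Nat.choose (a+1) b := Nat.choose_symm (by omega)
    have hs2 : Nat.choose a (a-b) = Nat.choose a b := Nat.choose_symm hba
    have h3 := Nat.add_one_mul_choose_eq a (a-b)
    rw [hs2, show (a - b) + 1 = a + 1 - b by omega, hs1] at h3
    exact h3
  nlinarith [h1, h2, Nat.choose_pos (show b ≤ a + 1 by omega)]

set_option maxHeartbeats 1000000 in
/-- Upper bound on `P(X_P ≥ t)` for a zero-sum population with absolute deviation `2α`. -/
theorem prob_tail_upper_bound
    {n : ℕ} (hn : 2 ≤ n) (k : ℕ) (hk : k ∈ Finset.Icc 1 (n - 1))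
    (α : ℝ) (hα : 0 < α)
    (x : Fin n → ℝ) (hsum : ∑ i, x i = 0) (habs : ∑ i, |x i| = 2 * α)
    (t : ℝ) (ht : t ∈ Set.Ioo 0 α) :
    (((univ : Finset (Fin n)).powersetCard k |>.filter
          (fun F => t ≤ ∑ i ∈ F, x i)).card : ℝ) / (n.choose k : ℝ)
      ≤ 1 - min 1 (t / (α - t))
            * (1 - 2 * k * ((n : ℝ) - k) / ((n : ℝ) * ((n : ℝ) - 1))) := by
  obtain ⟨hk1, hkn⟩ := Finset.mem_Icc.1 hk
  obtain ⟨ht0, htα⟩ := ht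
  set P := (univ : Finset (Fin n)).powersetCard k with hPdef
  set A := P.filter (fun F => t ≤ ∑ i ∈ F, x i) with hAdef
  set C := n.choose k with hCdef
  set N := A.card with hNdef
  set D := (n-2).choose (k-1) with hDdef
  have hCcard : P.card = C := by
    rw [hPdef, card_powersetCard, card_univ, Fintype.card_fin]
  have hNC : N ≤ C := hCcard ▸ card_le_card (filter_subset _ _)
  have hCpos : 0 < C := Nat.choose_pos (by omega)
  have hC : (0:ℝ) < (C:ℝ) := by exact_mod_cast hCpos
  -- positive and negative parts
  set p : Fin n → ℝ := fun i => max (x i) 0 with hpdef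
  set m : Fin n → ℝ := fun i => max (-x i) 0 with hmdef
  have hpm_sub : ∀ i, p i - m i = x i := by
    intro i
    simp only [hpdef, hmdef]
    rcases le_total 0 (x i) with h | h
    · rw [max_eq_left h, max_eq_right (by linarith)]; ring
    · rw [max_eq_right h, max_eq_left (by linarith)]; ring
  have hpm_add : ∀ i, p i + m i = |x i| := by
    intro i
    simp only [hpdef, hmdef]
    rcases le_total 0 (x i) with h | h
    · rw [max_eq_left h, max_eq_right (by linarith), abs_of_nonneg h]; ring
    · rw [max_eq_right h, max_eq_left (by linarith), abs_of_nonpos h]; ring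
  have hpnn : ∀ i, 0 ≤ p i := fun i => le_max_right _ _
  have hmnn : ∀ i, 0 ≤ m i := fun i => le_max_right _ _
  have hsub_sum : ∑ i, (p i - m i) = 0 := by
    rw [Finset.sum_congr rfl (fun i _ => hpm_sub i)]; exact hsum
  have hadd_sum : ∑ i, (p i + m i) = 2 * α := by
    rw [Finset.sum_congr rfl (fun i _ => hpm_add i)]; exact habs
  rw [Finset.sum_sub_distrib] at hsub_sum
  rw [Finset.sum_add_distrib] at hadd_sum
  have hpsum : ∑ i, p i = α := by linarith
  have hmsum : ∑ i, m i = α := by linarith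
  -- every subset sum is ≥ -α
  have hXlb : ∀ F : Finset (Fin n), -α ≤ ∑ i ∈ F, x i := by
    intro F
    have h1 : ∑ i ∈ F, m i ≤ α := by
      rw [← hmsum]
      exact sum_le_sum_of_subset_of_nonneg (subset_univ F) (fun i _ _ => hmnn i)
    have h2 : -(∑ i ∈ F, m i) ≤ ∑ i ∈ F, x i := by
      rw [← Finset.sum_neg_distrib]
      refine Finset.sum_le_sum fun i _ => ?_
      have := le_max_left (-x i) 0
      simp only [hmdef]
      linarith
    linarith
  -- Markov : sum over all subsets is zero
  have hzero : ∑ F ∈ P, ∑ i ∈ F, x i = 0 := by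
    rw [sum_subsets_sum]
    have hcount : ∀ i : Fin n,
        (((P.filter (fun F => i ∈ F)).card : ℝ)) = (((n-1).choose (k-1) : ℕ) : ℝ) := by
      intro i
      rw [hPdef, count_mem hk1 i, card_powersetCard, card_erase_of_mem (mem_univ i),
        card_univ, Fintype.card_fin]
    rw [Finset.sum_congr rfl (fun i _ => by rw [hcount i])]
    rw [← Finset.mul_sum, hsum, mul_zero]
  have hcard_split : N + (P.filter (fun F => ¬ t ≤ ∑ i ∈ F, x i)).card = C := by
    rw [hNdef, hAdef, Finset.card_filter_add_card_filter_not, hCcard]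
  have hsplit := Finset.sum_filter_add_sum_filter_not P
    (fun F => t ≤ ∑ i ∈ F, x i) (fun F => ∑ i ∈ F, x i)
  have l1 : (N : ℝ) * t ≤ ∑ F ∈ A, ∑ i ∈ F, x i := by
    have := Finset.card_nsmul_le_sum A (fun F => ∑ i ∈ F, x i) t
      (fun F hF => (mem_filter.1 hF).2)
    simpa [nsmul_eq_mul] using this
  have l2 : ((P.filter (fun F => ¬ t ≤ ∑ i ∈ F, x i)).card : ℝ) * (-α)
      ≤ ∑ F ∈ P.filter (fun F => ¬ t ≤ ∑ i ∈ F, x i), ∑ i ∈ F, x i := by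
    have := Finset.card_nsmul_le_sum (P.filter (fun F => ¬ t ≤ ∑ i ∈ F, x i))
      (fun F => ∑ i ∈ F, x i) (-α) (fun F _ => hXlb F)
    simpa [nsmul_eq_mul] using this
  have H1 : t * (N:ℝ) ≤ α * ((C:ℝ) - N) := by
    have hc : (N:ℝ) + ((P.filter (fun F => ¬ t ≤ ∑ i ∈ F, x i)).card : ℝ) = (C:ℝ) := by
      exact_mod_cast hcard_split
    have hS : ∑ F ∈ A, ∑ i ∈ F, x i
        + ∑ F ∈ P.filter (fun F => ¬ t ≤ ∑ i ∈ F, x i), ∑ i ∈ F, x i = 0 := by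
      rw [hAdef, hsplit, hzero]
    have hc' : α * ((P.filter (fun F => ¬ t ≤ ∑ i ∈ F, x i)).card : ℝ)
        = α * ((C:ℝ) - N) := by linear_combination α * hc
    linarith [l1, l2, hS, hc']
  -- product lower bound on the event
  have hprod_lb : ∀ F ∈ A, α * t ≤ (∑ i ∈ F, p i) * (∑ j ∈ univ \ F, m j) := by
    intro F hF
    have hXF : t ≤ ∑ i ∈ F, x i := (mem_filter.1 hF).2
    have hmF_nn : 0 ≤ ∑ i ∈ F, m i := Finset.sum_nonneg fun i _ => hmnn i
    have hu_eq : (∑ i ∈ F, p i) - (∑ i ∈ F, m i) = ∑ i ∈ F, x i := by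
      rw [← Finset.sum_sub_distrib]
      exact Finset.sum_congr rfl fun i _ => hpm_sub i
    have hw_eq : (∑ j ∈ univ \ F, m j) = α - ∑ i ∈ F, m i := by
      rw [Finset.sum_sdiff_eq_sub (subset_univ F), hmsum]
    have hu_le : (∑ i ∈ F, p i) ≤ α := by
      rw [← hpsum]
      exact sum_le_sum_of_subset_of_nonneg (subset_univ F) (fun i _ _ => hpnn i)
    have hu_ge : t ≤ ∑ i ∈ F, p i := by linarith
    rw [hw_eq]
    nlinarith [mul_nonneg (sub_nonneg.2 hu_ge) (sub_nonneg.2 hu_le),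
      mul_nonneg (le_trans ht0.le hu_ge) (sub_nonneg.2 hXF)]
  -- per-pair card bound
  have hcb : ∀ i j : Fin n, ((A.filter (fun F => i ∈ F ∧ j ∉ F)).card) ≤ D := by
    intro i j
    by_cases hij : i = j
    · subst hij
      have : A.filter (fun F => i ∈ F ∧ i ∉ F) = ∅ := by
        apply Finset.filter_false_of_mem
        rintro F _ ⟨h1, h2⟩
        exact h2 h1
      rw [this]
      simp
    · calc (A.filter (fun F => i ∈ F ∧ j ∉ F)).card
          ≤ (P.filter (fun F => i ∈ F ∧ j ∉ F)).card := by
            apply card_le_card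
            exact filter_subset_filter _ (filter_subset _ _)
        _ ≤ (((univ.erase j).erase i).powersetCard (k-1)).card := count_pair
        _ = D := by
            rw [card_powersetCard, card_erase_of_mem (mem_erase.2 ⟨hij, mem_univ i⟩),
              card_erase_of_mem (mem_univ j), card_univ, Fintype.card_fin, hDdef]
            congr 1
  -- H2
  have hstep := Finset.card_nsmul_le_sum A
    (fun F => (∑ i ∈ F, p i) * (∑ j ∈ univ \ F, m j)) (α * t) hprod_lb
  have hub : ∑ F ∈ A, (∑ i ∈ F, p i) * (∑ j ∈ univ \ F, m j) ≤ (D:ℝ) * (α * α) := by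
    rw [sum_prod_split A p m]
    calc ∑ i, ∑ j, ((A.filter (fun F => i ∈ F ∧ j ∉ F)).card : ℝ) * (p i * m j)
        ≤ ∑ i, ∑ j, (D:ℝ) * (p i * m j) := by
          refine Finset.sum_le_sum fun i _ => Finset.sum_le_sum fun j _ => ?_
          exact mul_le_mul_of_nonneg_right (by exact_mod_cast hcb i j)
            (mul_nonneg (hpnn i) (hmnn j))
      _ = (D:ℝ) * (α * α) := by
          have hre : ∑ i, ∑ j, ((D:ℝ)) * (p i * m j)
              = (D:ℝ) * ((∑ i, p i) * (∑ j, m j)) := by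
            rw [Finset.sum_mul_sum, Finset.mul_sum]
            exact Finset.sum_congr rfl fun i _ => by rw [Finset.mul_sum]
          rw [hre, hpsum, hmsum]
  have H2 : (N:ℝ) * (α * t) ≤ (D:ℝ) * (α * α) := by
    refine le_trans ?_ hub
    simpa [nsmul_eq_mul] using hstep
  have H2' : (N:ℝ) * t ≤ (D:ℝ) * α := by
    have h := H2
    have : α * ((N:ℝ) * t) ≤ α * ((D:ℝ) * α) := by nlinarith [h]
    exact le_of_mul_le_mul_left this hα
  -- cast the choose identity
  have hDC := choose_identity hn hk1 hkn
  have hkn' : (k:ℝ) ≤ (n:ℝ) := by exact_mod_cast (by omega : k ≤ n)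
  have hn2 : (2:ℝ) ≤ (n:ℝ) := by exact_mod_cast hn
  have hDCr : (D:ℝ) * ((n:ℝ) * ((n:ℝ) - 1)) = (C:ℝ) * ((k:ℝ) * ((n:ℝ) - k)) := by
    have h := congrArg (Nat.cast : ℕ → ℝ) hDC
    push_cast [Nat.cast_sub (show 1 ≤ n by omega), Nat.cast_sub (show k ≤ n by omega)] at h
    convert h using 2 <;> ring
  clear_value P A N C D
  clear hDC hCcard hcard_split hzero hsplit l1 l2 hXlb hprod_lb hcb hstep hub H2
  clear hpm_sub hpm_add hpnn hmnn hsub_sum hadd_sum hpsum hmsum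
  clear hpdef hmdef
  clear_value p m
  clear p m
  clear hsum habs hk hAdef hPdef
  set Q := 2 * (k:ℝ) * ((n : ℝ) - k) / ((n : ℝ) * ((n : ℝ) - 1)) with hQdef
  have hnn : (0:ℝ) < (n:ℝ) * ((n:ℝ) - 1) := mul_pos (by linarith) (by linarith)
  have hQC : Q * (C:ℝ) = 2 * (D:ℝ) := by
    rw [hQdef, div_mul_eq_mul_div, div_eq_iff hnn.ne']
    linear_combination (-2:ℝ) * hDCr
  have hQ0 : 0 ≤ Q := by
    apply div_nonneg _ hnn.le
    exact mul_nonneg (mul_nonneg (by norm_num) (Nat.cast_nonneg k)) (by linarith)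
  have hαt : 0 < α - t := by linarith
  clear hQdef hDCr hnn hkn' hn2
  clear_value Q
  rw [div_le_iff₀ hC]
  rcases le_or_gt α (2 * t) with hcase | hcase
  · -- t ≥ α/2 : min = 1
    have hmin : min 1 (t / (α - t)) = 1 := by
      apply min_eq_left
      rw [le_div_iff₀ hαt]
      linarith
    rw [hmin]
    have h2t : (0:ℝ) < 2 * t := by linarith
    have hQCa : α * (Q * (C:ℝ)) = 2 * ((D:ℝ) * α) := by linear_combination α * hQC
    have hgoal : (2*t) * (N:ℝ) ≤ (2*t) * (Q * (C:ℝ)) := by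
      nlinarith [H2', hQCa, mul_nonneg (sub_nonneg.2 hcase) (mul_nonneg hQ0 hC.le)]
    have hgoal2 := le_of_mul_le_mul_left hgoal h2t
    linarith [hgoal2, (by ring : (1 - 1 * (1 - Q)) * (C:ℝ) = Q * (C:ℝ))]
  · -- t < α/2 : min = t/(α−t)
    have hmin : min 1 (t / (α - t)) = t / (α - t) := by
      apply min_eq_right
      rw [div_le_one hαt]
      linarith
    rw [hmin]
    have hrw : (1 - t / (α - t) * (1 - Q)) * (C:ℝ)
        = ((α - 2*t + t*Q) * (C:ℝ)) / (α - t) := by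
      rw [div_mul_eq_mul_div, sub_div' hαt.ne', div_mul_eq_mul_div,
        show 1 * (α - t) - t * (1 - Q) = α - 2*t + t*Q by ring]
    rw [hrw, le_div_iff₀ hαt]
    have H2'' : 2 * ((N:ℝ) * t) ≤ α * (Q * (C:ℝ)) := by
      rw [hQC]; linarith [H2']
    rcases le_or_gt (2*t) (Q * (α + t)) with hsub | hsub
    · -- use Markov
      have k1 : (N:ℝ) * (α + t) ≤ α * (C:ℝ) := by linarith [H1]
      have k2 : α * (α - t) ≤ (α + t) * (α - 2*t + t*Q) := by
        nlinarith [mul_nonneg ht0.le (sub_nonneg.2 hsub)]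
      have hW : (α + t) * ((N:ℝ) * (α - t)) ≤ (α + t) * ((α - 2*t + t*Q) * (C:ℝ)) := by
        nlinarith [mul_le_mul_of_nonneg_right k1 hαt.le,
          mul_le_mul_of_nonneg_right k2 hC.le]
      exact le_of_mul_le_mul_left hW (by linarith)
    · -- use second-moment bound
      have k3 : α * Q * (α - t) ≤ 2 * t * (α - 2*t + t*Q) := by
        nlinarith [mul_nonneg (sub_nonneg.2 hcase.le) (sub_nonneg.2 hsub.le)]
      have hW : (2 * t) * ((N:ℝ) * (α - t)) ≤ (2 * t) * ((α - 2*t + t*Q) * (C:ℝ)) := by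
        nlinarith [mul_le_mul_of_nonneg_right H2'' hαt.le,
          mul_le_mul_of_nonneg_right k3 hC.le]
      exact le_of_mul_le_mul_left hW (by linarith)
end

section
/- Let P₁, P₂ ∈ ℝⁿ with P₁ ≺ P₂ (P₁ majorized by P₂), let k ∈ [n-1], and let X_{P_j} denote the sum of a uniformly random k-element subset of the coordinates of P_j. Then for every continuous convex function f : ℝ → ℝ, E(f(X_{P₁})) ≤ E(f(X_{P₂})). -/
open Finset

/-- `x` is majorized by `y`. -/
def IsMajorizedBy {n : ℕ} (x y : Fin n → ℝ) : Prop :=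
  (∀ A : Finset (Fin n), ∃ B : Finset (Fin n),
      B.card = A.card ∧ ∑ i ∈ A, x i ≤ ∑ i ∈ B, y i)
    ∧ ∑ i, x i = ∑ i, y i

private lemma abel_identity (d X : ℕ → ℝ) (n : ℕ) :
    ∑ j ∈ Finset.range n, d j * (X (j + 1) - X j)
      = ∑ m ∈ Finset.range n, (d m - d (m + 1)) * X (m + 1) + d n * X n - d 0 * X 0 := by
  induction n with
  | zero => simp
  | succ n ih =>
    rw [Finset.sum_range_succ, ih, Finset.sum_range_succ (f := fun m => (d m - d (m + 1)) * X (m + 1))]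
    ring

/-- Strictly monotone enumeration of a finset grows at least as fast as the identity. -/
private lemma le_orderEmbOfFin {n : ℕ} (C : Finset (Fin n)) :
    ∀ j : ℕ, ∀ h : j < C.card, j ≤ ((C.orderEmbOfFin rfl) ⟨j, h⟩ : ℕ) := by
  intro j
  induction j with
  | zero => intro h; exact Nat.zero_le _
  | succ j ih =>
    intro h
    have h' : j < C.card := Nat.lt_of_succ_lt h
    have hlt : ((C.orderEmbOfFin rfl) ⟨j, h'⟩ : ℕ) < ((C.orderEmbOfFin rfl) ⟨j + 1, h⟩ : ℕ) := by
      have := (C.orderEmbOfFin rfl).strictMono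
        (show (⟨j, h'⟩ : Fin C.card) < ⟨j + 1, h⟩ from by simp [Fin.lt_def])
      exact this
    have := ih h'
    omega

/-- Sum of an antitone function over any set is at most its sum over the initial segment of the
same size. -/
private lemma sum_le_sum_initial {n : ℕ} (e : Fin n → ℝ) (he : Antitone e)
    (C : Finset (Fin n)) :
    ∑ j ∈ C, e j ≤ ∑ j ∈ Finset.univ.filter (fun j : Fin n => (j : ℕ) < C.card), e j := by
  have hmn : C.card ≤ n := by
    simpa using C.card_le_univ
  rcases Nat.eq_zero_or_pos C.card with h0 | h0
  · have : C = ∅ := Finset.card_eq_zero.mp h0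
    subst this
    simp
  haveI : NeZero C.card := ⟨h0.ne'⟩
  have himg : Finset.image (C.orderEmbOfFin rfl) Finset.univ = C := by
    ext a
    simp only [Finset.mem_image, Finset.mem_univ, true_and]
    rw [← Set.mem_range, Finset.range_orderEmbOfFin, Finset.mem_coe]
  have h1 : ∑ j ∈ C, e j = ∑ i : Fin C.card, e (C.orderEmbOfFin rfl i) := by
    conv_lhs => rw [← himg]
    rw [Finset.sum_image (fun a _ b _ h => (C.orderEmbOfFin rfl).injective h)]
  have h2 : ∑ j ∈ Finset.univ.filter (fun j : Fin n => (j : ℕ) < C.card), e j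
      = ∑ i : Fin C.card, e (Fin.castLE hmn i) := by
    refine (Finset.sum_nbij' (fun i : Fin C.card => Fin.castLE hmn i)
      (fun a : Fin n => if h : (a : ℕ) < C.card then (⟨a, h⟩ : Fin C.card) else 0)
      ?_ ?_ ?_ ?_ ?_).symm
    · intro a _
      simp only [Finset.mem_filter, Finset.mem_univ, true_and, Fin.coe_castLE]
      exact a.isLt
    · intro a ha; simp
    · intro a _; simp [Fin.castLE]
    · intro a ha
      simp only [Finset.mem_filter, Finset.mem_univ, true_and] at ha
      simp [Fin.castLE, ha]
    · intro a _; rfl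
  rw [h1, h2]
  apply Finset.sum_le_sum
  intro i _
  apply he
  rw [Fin.le_def]
  exact le_orderEmbOfFin C i i.isLt

private lemma filter_sum_eq {n : ℕ} (m : ℕ) (hmn : m ≤ n) (u : Fin n → ℝ) :
    ∑ j ∈ Finset.univ.filter (fun j : Fin n => (j : ℕ) < m), u j
      = ∑ j ∈ Finset.range m, if h : j < n then u ⟨j, h⟩ else 0 := by
  rcases Nat.eq_zero_or_pos n with hn0 | hn0
  · subst hn0
    have : m = 0 := by omega
    subst this
    simp
  haveI : NeZero n := ⟨by omega⟩
  refine Finset.sum_nbij' (fun a : Fin n => (a : ℕ))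
    (fun j : ℕ => if h : j < n then (⟨j, h⟩ : Fin n) else 0) ?_ ?_ ?_ ?_ ?_
  · intro a ha; simp only [Finset.mem_filter] at ha; simp [ha.2]
  · intro j hj
    simp only [Finset.mem_range] at hj
    have hjn : j < n := lt_of_lt_of_le hj hmn
    simp [hjn, hj]
  · intro a _; simp
  · intro j hj
    simp only [Finset.mem_range] at hj
    have hjn : j < n := lt_of_lt_of_le hj hmn
    simp [hjn]
  · intro a _; simp

private lemma card_filter_lt {n : ℕ} (m : ℕ) (hmn : m ≤ n) :
    (Finset.univ.filter (fun j : Fin n => (j : ℕ) < m)).card = m := by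
  have himg : (Finset.univ.filter (fun j : Fin n => (j : ℕ) < m)).image Fin.val
      = Finset.range m := by
    ext a
    simp only [Finset.mem_image, Finset.mem_filter, Finset.mem_univ, true_and, Finset.mem_range]
    constructor
    · rintro ⟨b, hb, rfl⟩; exact hb
    · intro ha; exact ⟨⟨a, lt_of_lt_of_le ha hmn⟩, ha, rfl⟩
  have := congrArg Finset.card himg
  rwa [Finset.card_image_of_injective _ Fin.val_injective, Finset.card_range] at this

/-- The key inequality: any linear functional of `x` is dominated by the same functional applied
to a suitable permutation of `y`. -/
private lemma dot_le_max {n : ℕ} (hn : 0 < n) (x y : Fin n → ℝ) (hmaj : IsMajorizedBy x y)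
    (c : Fin n → ℝ) :
    ∃ σ : Equiv.Perm (Fin n), ∑ i, c i * x i ≤ ∑ i, c i * y (σ i) := by
  classical
  set τ : Equiv.Perm (Fin n) := Tuple.sort (fun i => -c i) with hτ
  set ρ : Equiv.Perm (Fin n) := Tuple.sort (fun i => -y i) with hρ
  have hcτ : Antitone (fun i => c (τ i)) := by
    intro a b hab
    have := Tuple.monotone_sort (fun i => -c i) hab
    simp only [Function.comp_apply] at this
    linarith
  have hyρ : Antitone (fun i => y (ρ i)) := by
    intro a b hab
    have := Tuple.monotone_sort (fun i => -y i) hab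
    simp only [Function.comp_apply] at this
    linarith
  set d : ℕ → ℝ := fun j => c (τ ⟨min j (n - 1), by omega⟩) with hd
  have hdanti : Antitone d := by
    intro a b hab
    apply hcτ
    rw [Fin.le_def]
    simp only
    omega
  have hdeq : ∀ j (h : j < n), d j = c (τ ⟨j, h⟩) := by
    intro j h
    exact congrArg (fun i : Fin n => c (τ i))
      (show (⟨min j (n - 1), by omega⟩ : Fin n) = ⟨j, h⟩ by ext; simp; omega)
  set gx : ℕ → ℝ := fun j => if h : j < n then x (τ ⟨j, h⟩) else 0 with hgx
  set gy : ℕ → ℝ := fun j => if h : j < n then y (ρ ⟨j, h⟩) else 0 with hgy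
  set X : ℕ → ℝ := fun m => ∑ j ∈ Finset.range m, gx j with hX
  set Y : ℕ → ℝ := fun m => ∑ j ∈ Finset.range m, gy j with hY
  have hXsucc : ∀ j, X (j + 1) - X j = gx j := by
    intro j; simp [hX, Finset.sum_range_succ]
  have hYsucc : ∀ j, Y (j + 1) - Y j = gy j := by
    intro j; simp [hY, Finset.sum_range_succ]
  -- X m ≤ Y m for m ≤ n
  have hXY : ∀ m, m ≤ n → X m ≤ Y m := by
    intro m hmn
    set A : Finset (Fin n) :=
      (Finset.univ.filter (fun j : Fin n => (j : ℕ) < m)).image τ with hA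
    have hAcard : A.card = m := by
      rw [hA, Finset.card_image_of_injective _ τ.injective, card_filter_lt m hmn]
    have hXA : X m = ∑ i ∈ A, x i := by
      rw [hA, Finset.sum_image (fun a _ b _ h => τ.injective h)]
      exact (filter_sum_eq m hmn (fun j => x (τ j))).symm
    obtain ⟨B, hBcard, hAB⟩ := hmaj.1 A
    have hBcard' : B.card = m := by rw [hBcard, hAcard]
    -- sum over B of y is at most sum of top m values of y
    set C : Finset (Fin n) := B.image ρ.symm with hC
    have hCcard : C.card = m := by
      rw [hC, Finset.card_image_of_injective _ ρ.symm.injective, hBcard']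
    have hBC : ∑ i ∈ B, y i = ∑ j ∈ C, y (ρ j) := by
      rw [hC, Finset.sum_image (fun a _ b _ h => ρ.symm.injective h)]
      apply Finset.sum_congr rfl
      intro i _
      simp
    have htop := sum_le_sum_initial (fun j => y (ρ j)) hyρ C
    rw [hCcard] at htop
    have hYm : Y m = ∑ j ∈ Finset.univ.filter (fun j : Fin n => (j : ℕ) < m), y (ρ j) :=
      (filter_sum_eq m hmn (fun j => y (ρ j))).symm
    calc X m = ∑ i ∈ A, x i := hXA
      _ ≤ ∑ i ∈ B, y i := hAB
      _ = ∑ j ∈ C, y (ρ j) := hBC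
      _ ≤ _ := htop
      _ = Y m := hYm.symm
  have hX0 : X 0 = 0 := by simp [hX]
  have hY0 : Y 0 = 0 := by simp [hY]
  have hXn : X n = Y n := by
    have h1 : X n = ∑ i, x i := by
      calc X n = ∑ j ∈ Finset.range n, gx j := rfl
        _ = ∑ i : Fin n, gx i := (Fin.sum_univ_eq_sum_range gx n).symm
        _ = ∑ i : Fin n, x (τ i) := by
            apply Finset.sum_congr rfl; intro i _; simp [hgx, i.isLt]
        _ = ∑ i, x i := Equiv.sum_comp τ x
    have h2 : Y n = ∑ i, y i := by
      calc Y n = ∑ j ∈ Finset.range n, gy j := rfl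
        _ = ∑ i : Fin n, gy i := (Fin.sum_univ_eq_sum_range gy n).symm
        _ = ∑ i : Fin n, y (ρ i) := by
            apply Finset.sum_congr rfl; intro i _; simp [hgy, i.isLt]
        _ = ∑ i, y i := Equiv.sum_comp ρ y
    rw [h1, h2]; exact hmaj.2
  refine ⟨τ.symm.trans ρ, ?_⟩
  have hLHS : ∑ i, c i * x i = ∑ j ∈ Finset.range n, d j * (X (j + 1) - X j) := by
    have : ∑ j ∈ Finset.range n, d j * (X (j + 1) - X j)
        = ∑ i : Fin n, (fun j : ℕ => d j * (X (j + 1) - X j)) i :=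
      (Fin.sum_univ_eq_sum_range _ n).symm
    rw [this]
    rw [← Equiv.sum_comp τ (fun i => c i * x i)]
    apply Finset.sum_congr rfl
    intro i _
    simp only [hXsucc]
    rw [hdeq i i.isLt]
    simp [hgx, i.isLt]
  have hRHS : ∑ i, c i * y ((τ.symm.trans ρ) i)
      = ∑ j ∈ Finset.range n, d j * (Y (j + 1) - Y j) := by
    have : ∑ j ∈ Finset.range n, d j * (Y (j + 1) - Y j)
        = ∑ i : Fin n, (fun j : ℕ => d j * (Y (j + 1) - Y j)) i :=
      (Fin.sum_univ_eq_sum_range _ n).symm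
    rw [this]
    rw [← Equiv.sum_comp τ (fun i => c i * y ((τ.symm.trans ρ) i))]
    apply Finset.sum_congr rfl
    intro i _
    simp only [hYsucc, Equiv.trans_apply, Equiv.symm_apply_apply]
    rw [hdeq i i.isLt]
    simp [hgy, i.isLt]
  rw [hLHS, hRHS, abel_identity d X n, abel_identity d Y n, hX0, hY0, hXn]
  apply sub_le_sub_right
  apply add_le_add_left
  apply Finset.sum_le_sum
  intro m hm
  rw [Finset.mem_range] at hm
  apply mul_le_mul_of_nonneg_left (hXY (m + 1) hm)
  have := hdanti (Nat.le_succ m)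
  linarith

/-- Majorization implies membership in the convex hull of the permutations. -/
private lemma mem_convexHull_perms {n : ℕ} (hn : 0 < n) (x y : Fin n → ℝ)
    (hmaj : IsMajorizedBy x y) :
    x ∈ convexHull ℝ (Set.range fun σ : Equiv.Perm (Fin n) => fun i => y (σ i)) := by
  classical
  by_contra hx
  have hfin : (Set.range fun σ : Equiv.Perm (Fin n) => fun i => y (σ i)).Finite :=
    Set.finite_range _
  have hclosed := hfin.isClosed_convexHull (𝕜 := ℝ) (E := Fin n → ℝ)
  obtain ⟨l, u, hl₁, hl₂⟩ :=
    geometric_hahn_banach_point_closed (convex_convexHull ℝ _) hclosed hx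
  set c : Fin n → ℝ := fun i => -(l fun j => if i = j then (1 : ℝ) else 0) with hc
  have hl : ∀ z : Fin n → ℝ, l z = ∑ i, z i * -(c i) := by
    intro z
    conv_lhs => rw [pi_eq_sum_univ z]
    rw [map_sum]
    apply Finset.sum_congr rfl
    intro i _
    rw [map_smul]
    simp [hc, smul_eq_mul]
  obtain ⟨σ, hσ⟩ := dot_le_max hn x y hmaj c
  have hmem : (fun i => y (σ i)) ∈
      convexHull ℝ (Set.range fun σ : Equiv.Perm (Fin n) => fun i => y (σ i)) :=
    subset_convexHull ℝ _ ⟨σ, rfl⟩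
  have h1 := hl₂ _ hmem
  have h2 : l x = -∑ i, c i * x i := by
    rw [hl x]; rw [← Finset.sum_neg_distrib]; apply Finset.sum_congr rfl; intros; ring
  have h3 : l (fun i => y (σ i)) = -∑ i, c i * y (σ i) := by
    rw [hl]; rw [← Finset.sum_neg_distrib]; apply Finset.sum_congr rfl; intros; ring
  rw [h2] at hl₁
  rw [h3] at h1
  linarith

private lemma sum_powersetCard_perm {n k : ℕ} (y : Fin n → ℝ) (σ : Equiv.Perm (Fin n))
    (f : ℝ → ℝ) :
    ∑ F ∈ (univ : Finset (Fin n)).powersetCard k, f (∑ i ∈ F, y (σ i))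
      = ∑ F ∈ (univ : Finset (Fin n)).powersetCard k, f (∑ i ∈ F, y i) := by
  refine Finset.sum_nbij' (fun F => F.map σ.toEmbedding) (fun F => F.map σ.symm.toEmbedding)
    ?_ ?_ ?_ ?_ ?_
  · intro F hF
    simp only [Finset.mem_powersetCard] at hF ⊢
    exact ⟨Finset.subset_univ _, by rw [Finset.card_map]; exact hF.2⟩
  · intro F hF
    simp only [Finset.mem_powersetCard] at hF ⊢
    exact ⟨Finset.subset_univ _, by rw [Finset.card_map]; exact hF.2⟩
  · intro F _
    ext i
    simp
  · intro F _
    ext i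
    simp
  · intro F _
    rw [Finset.sum_map]
    rfl

/-- Karlin: if `P₁ ≺ P₂`, then for every continuous convex `f`,
`E f(X_{P₁}) ≤ E f(X_{P₂})`, where `X_P` is the sum of a uniformly random `k`-subset. -/
theorem karlin_convex_order
    {n k : ℕ} (hk : 1 ≤ k) (hkn : k < n)
    (P₁ P₂ : Fin n → ℝ) (hmaj : IsMajorizedBy P₁ P₂)
    (f : ℝ → ℝ) (hconv : ConvexOn ℝ Set.univ f) (hcont : Continuous f) :
    (∑ F ∈ (univ : Finset (Fin n)).powersetCard k, f (∑ i ∈ F, P₁ i)) / (n.choose k : ℝ)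
      ≤ (∑ F ∈ (univ : Finset (Fin n)).powersetCard k, f (∑ i ∈ F, P₂ i)) / (n.choose k : ℝ) := by
  classical
  have hn : 0 < n := lt_of_le_of_lt (Nat.zero_le k) hkn
  have hx := mem_convexHull_perms hn P₁ P₂ hmaj
  rw [_root_.convexHull_eq] at hx
  obtain ⟨ι, t, w, z, hw0, hw1, hzs, hxeq⟩ := hx
  rw [Finset.centerMass_eq_of_sum_1 _ _ hw1] at hxeq
  -- choose permutations
  have hperm : ∀ i ∈ t, ∃ σ : Equiv.Perm (Fin n), z i = fun j => P₂ (σ j) := by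
    intro i hi
    obtain ⟨σ, hσ⟩ := hzs i hi
    exact ⟨σ, hσ.symm⟩
  have hmain : ∑ F ∈ (univ : Finset (Fin n)).powersetCard k, f (∑ i ∈ F, P₁ i)
      ≤ ∑ F ∈ (univ : Finset (Fin n)).powersetCard k, f (∑ i ∈ F, P₂ i) := by
    have hstep : ∀ F ∈ (univ : Finset (Fin n)).powersetCard k,
        f (∑ j ∈ F, P₁ j) ≤ ∑ i ∈ t, w i * f (∑ j ∈ F, z i j) := by
      intro F _
      have hFval : ∑ j ∈ F, P₁ j = ∑ i ∈ t, w i • (∑ j ∈ F, z i j) := by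
        rw [← hxeq]
        rw [show ∑ j ∈ F, (∑ i ∈ t, w i • z i) j = ∑ j ∈ F, ∑ i ∈ t, w i * z i j from by
          apply Finset.sum_congr rfl; intro j _; simp [Finset.sum_apply]]
        rw [Finset.sum_comm]
        apply Finset.sum_congr rfl
        intro i _
        rw [smul_eq_mul, Finset.mul_sum]
      rw [hFval]
      have := hconv.map_sum_le hw0 hw1 (fun i _ => Set.mem_univ (∑ j ∈ F, z i j))
      simpa [smul_eq_mul] using this
    calc ∑ F ∈ (univ : Finset (Fin n)).powersetCard k, f (∑ i ∈ F, P₁ i)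
        ≤ ∑ F ∈ (univ : Finset (Fin n)).powersetCard k, ∑ i ∈ t, w i * f (∑ j ∈ F, z i j) :=
          Finset.sum_le_sum hstep
      _ = ∑ i ∈ t, w i * ∑ F ∈ (univ : Finset (Fin n)).powersetCard k, f (∑ j ∈ F, z i j) := by
          rw [Finset.sum_comm]
          apply Finset.sum_congr rfl
          intro i _
          rw [Finset.mul_sum]
      _ = ∑ i ∈ t, w i * ∑ F ∈ (univ : Finset (Fin n)).powersetCard k, f (∑ j ∈ F, P₂ j) := by
          apply Finset.sum_congr rfl
          intro i hi
          obtain ⟨σ, hσ⟩ := hperm i hi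
          rw [hσ]
          rw [sum_powersetCard_perm P₂ σ f]
      _ = ∑ F ∈ (univ : Finset (Fin n)).powersetCard k, f (∑ j ∈ F, P₂ j) := by
          rw [← Finset.sum_mul, hw1, one_mul]
  have hchoose : (0 : ℝ) < (n.choose k : ℝ) := by
    exact_mod_cast Nat.choose_pos (le_of_lt hkn)
  exact div_le_div_of_nonneg_right hmain hchoose.le
end
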